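/- With I_j as above, assume ω^{1/2}χ ∈ L² and ω^{3/2−σ}χ ∈ L² for σ ∈ [1/2, 1]. Then for all q₁, q₂ ∈ ℝ^{dn} and α₁, α₂ ∈ G^σ := {α : ω^σ α ∈ L²}, one has |∇_{q_{j}} I_j(q₁,α₁) − ∇_{q_{j}} I_j(q₂,α₂)| ≤ 4π ‖ω^{1/2}χ‖_{L²} ‖α₁ − α₂‖_{L²} + 8√2 π² ‖ω^{3/2−σ}χ‖_{L²} |q_{1j} − q_{2j}| ‖α₂‖_{G^σ}. -/

import Mathlib

open MeasureTheory

noncomputable section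

/-- The dispersion relation ω(k) = √(|k|² + m²). -/
def omega (d : ℕ) (m : ℝ) (k : EuclideanSpace ℝ (Fin d)) : ℝ :=
  Real.sqrt (‖k‖ ^ 2 + m ^ 2)

/-- The i-th component of the gradient
∇_{q_j} I_j(q,α) = ∫ 2πi k (χ(k)/√ω(k)) [α(k) e^{2πi k·q_j} − conj(α(k)) e^{−2πi k·q_j}] dk. -/
def gradI (d : ℕ) (m : ℝ) (χ : EuclideanSpace ℝ (Fin d) → ℝ)
    (qj : EuclideanSpace ℝ (Fin d)) (α : EuclideanSpace ℝ (Fin d) → ℂ) (i : Fin d) : ℂ :=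
  ∫ k : EuclideanSpace ℝ (Fin d),
    2 * (Real.pi : ℂ) * Complex.I * ((k i : ℝ) : ℂ) *
      ((χ k / Real.sqrt (omega d m k) : ℝ) : ℂ) *
      (α k * Complex.exp (((2 * Real.pi * ∑ l, k l * qj l : ℝ) : ℂ) * Complex.I) -
        (starRingEnd ℂ) (α k) *
          Complex.exp (-(((2 * Real.pi * ∑ l, k l * qj l : ℝ) : ℂ) * Complex.I)))

/-- The G^σ norm ‖α‖_{G^σ} = ‖ω^σ α‖_{L²}. -/
def Gnorm (d : ℕ) (m σ : ℝ) (α : EuclideanSpace ℝ (Fin d) → ℂ) : ℝ :=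
  (eLpNorm (fun k => ((omega d m k ^ σ : ℝ) : ℂ) * α k) 2 volume).toReal

/- ----------------  Auxiliary definitions and lemmas  ---------------- -/

/-- phase -/
def theta (d : ℕ) (q k : EuclideanSpace ℝ (Fin d)) : ℝ :=
  2 * Real.pi * ∑ l, k l * q l

/-- the field part of the integrand -/
def Dfun (d : ℕ) (q : EuclideanSpace ℝ (Fin d)) (α : EuclideanSpace ℝ (Fin d) → ℂ)
    (k : EuclideanSpace ℝ (Fin d)) : ℂ :=
  α k * Complex.exp (((theta d q k : ℝ) : ℂ) * Complex.I) -
    (starRingEnd ℂ) (α k) * Complex.exp (-(((theta d q k : ℝ) : ℂ) * Complex.I))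

/-- the full integrand of `gradI` -/
def fIg (d : ℕ) (m : ℝ) (χ : EuclideanSpace ℝ (Fin d) → ℝ) (q : EuclideanSpace ℝ (Fin d))
    (α : EuclideanSpace ℝ (Fin d) → ℂ) (i : Fin d) (k : EuclideanSpace ℝ (Fin d)) : ℂ :=
  2 * (Real.pi : ℂ) * Complex.I * ((k i : ℝ) : ℂ) *
    ((χ k / Real.sqrt (omega d m k) : ℝ) : ℂ) * Dfun d q α k

lemma gradI_eq (d : ℕ) (m : ℝ) (χ : EuclideanSpace ℝ (Fin d) → ℝ)
    (q : EuclideanSpace ℝ (Fin d)) (α : EuclideanSpace ℝ (Fin d) → ℂ) (i : Fin d) :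
    gradI d m χ q α i = ∫ k, fIg d m χ q α i k := rfl


/-- product of two L² functions is integrable -/
lemma mul_mem2_integrable {X : Type*} [MeasurableSpace X] {μ : Measure X} {f g : X → ℝ}
    (hf : MemLp f 2 μ) (hg : MemLp g 2 μ) : Integrable (fun x => f x * g x) μ := by
  rw [← memLp_one_iff_integrable]
  exact hg.smul hf (p := 2) (q := 2) (r := 1)

/-- Cauchy–Schwarz for integrals, real version. -/
lemma cs2_real {X : Type*} [MeasurableSpace X] {μ : Measure X} {f g : X → ℝ}
    (hf : MemLp f 2 μ) (hg : MemLp g 2 μ) :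
    ∫ x, ‖f x‖ * ‖g x‖ ∂μ ≤ (eLpNorm f 2 μ).toReal * (eLpNorm g 2 μ).toReal := by
  have h2 : ENNReal.ofReal (2 : ℝ) = 2 := by norm_num
  have := integral_mul_norm_le_Lp_mul_Lq (μ := μ) (f := f) (g := g)
    (p := 2) (q := 2) ⟨by norm_num, by norm_num, by norm_num⟩ (h2 ▸ hf) (h2 ▸ hg)
  rw [hf.eLpNorm_eq_integral_rpow_norm two_ne_zero ENNReal.ofNat_ne_top,
    hg.eLpNorm_eq_integral_rpow_norm two_ne_zero ENNReal.ofNat_ne_top]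
  rw [ENNReal.toReal_ofReal (by positivity), ENNReal.toReal_ofReal (by positivity)]
  simpa [ENNReal.toReal_ofNat, one_div] using this

/-- Cauchy–Schwarz for integrals, second function complex valued. -/
lemma cs2 {X : Type*} [MeasurableSpace X] {μ : Measure X} {f : X → ℝ} {g : X → ℂ}
    (hf : MemLp f 2 μ) (hg : MemLp g 2 μ) :
    ∫ x, ‖f x‖ * ‖g x‖ ∂μ ≤ (eLpNorm f 2 μ).toReal * (eLpNorm g 2 μ).toReal := by
  have h := cs2_real hf hg.norm
  rw [eLpNorm_norm] at h
  simp only [norm_norm] at h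
  exact h

lemma exp_I_bound (y : ℝ) : ‖Complex.exp ((y : ℂ) * Complex.I) - 1‖ ≤ |y| := by
  have h1 : Complex.exp ((y : ℂ) * Complex.I) - 1 =
      Complex.mk (Real.cos y - 1) (Real.sin y) := by
    rw [Complex.exp_mul_I]
    apply Complex.ext <;>
      simp [Complex.cos_ofReal_re, Complex.sin_ofReal_re, Complex.cos_ofReal_im,
        Complex.sin_ofReal_im]
  rw [h1]
  have h2 : ‖Complex.mk (Real.cos y - 1) (Real.sin y)‖ =
      Real.sqrt ((Real.cos y - 1) ^ 2 + Real.sin y ^ 2) := by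
    rw [Complex.norm_def, Complex.normSq_mk]; ring_nf
  rw [h2]
  have hs : |Real.sin (y / 2)| ≤ |y / 2| := Real.abs_sin_le_abs
  have hsq : Real.sin (y / 2) ^ 2 ≤ (y / 2) ^ 2 := by
    rw [← sq_abs, ← sq_abs (y / 2)]; exact pow_le_pow_left₀ (abs_nonneg _) hs 2
  have hcos : (1 - Real.cos y) / 2 = Real.sin (y / 2) ^ 2 := by
    have h3 : Real.sin (y / 2) ^ 2 = (1 - Real.cos y) / 2 := by
      rw [← sq_abs, Real.abs_sin_half, Real.sq_sqrt]; linarith [Real.cos_le_one y]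
    linarith
  have hpt : Real.cos y ^ 2 + Real.sin y ^ 2 = 1 := Real.cos_sq_add_sin_sq y
  calc Real.sqrt ((Real.cos y - 1) ^ 2 + Real.sin y ^ 2) ≤ Real.sqrt (y ^ 2) := by
        apply Real.sqrt_le_sqrt; nlinarith
    _ = |y| := Real.sqrt_sq_eq_abs y

lemma exp_diff_bound (a b : ℝ) :
    ‖Complex.exp ((a : ℂ) * Complex.I) - Complex.exp ((b : ℂ) * Complex.I)‖ ≤ |a - b| := by
  have h : Complex.exp ((a : ℂ) * Complex.I) - Complex.exp ((b : ℂ) * Complex.I) =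
      Complex.exp ((b : ℂ) * Complex.I) * (Complex.exp (((a - b : ℝ) : ℂ) * Complex.I) - 1) := by
    rw [mul_sub, ← Complex.exp_add, mul_one]
    congr 2
    push_cast; ring
  rw [h, norm_mul]
  have h1 : ‖Complex.exp ((b : ℂ) * Complex.I)‖ = 1 := Complex.norm_exp_ofReal_mul_I b
  rw [h1, one_mul]
  exact exp_I_bound (a - b)

set_option maxHeartbeats 2000000 in
/-- Lipschitz-type estimate for ∇_{, q_j} I_j: assuming ω^{1/2}χ ∈ L² and ω^{3/2−σ}χ ∈ L²
for σ ∈ [1/2, 1], for all q₁, q₂ ∈ ℝ^{dn} and α₁, α₂ ∈ G^σ,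
|∇I_j(q₁,α₁) − ∇I_j(q₂,α₂)| ≤ 4π ‖ω^{1/2}χ‖ ‖α₁−α₂‖_{L²}
  + 8√2 π² ‖ω^{3/2−σ}χ‖ |q_{1j}−q_{2j}| ‖α₂‖_{G^σ}. -/
theorem gradI_lipschitz (d n : ℕ) (m σ : ℝ) (hm : 0 < m)
    (hσ : σ ∈ Set.Icc (1 / 2 : ℝ) 1)
    (χ : EuclideanSpace ℝ (Fin d) → ℝ)
    (hχ₁ : MemLp (fun k => Real.sqrt (omega d m k) * χ k) 2 volume)
    (hχ₂ : MemLp (fun k => omega d m k ^ ((3 : ℝ) / 2 - σ) * χ k) 2 volume)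
    (q₁ q₂ : Fin n → EuclideanSpace ℝ (Fin d)) (j : Fin n)
    (α₁ α₂ : EuclideanSpace ℝ (Fin d) → ℂ)
    (hα₁ : MemLp (fun k => ((omega d m k ^ σ : ℝ) : ℂ) * α₁ k) 2 volume)
    (hα₂ : MemLp (fun k => ((omega d m k ^ σ : ℝ) : ℂ) * α₂ k) 2 volume) :
    Real.sqrt (∑ i, ‖gradI d m χ (q₁ j) α₁ i - gradI d m χ (q₂ j) α₂ i‖ ^ 2) ≤
      4 * Real.pi *
          (eLpNorm (fun k => Real.sqrt (omega d m k) * χ k) 2 volume).toReal *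
          (eLpNorm (fun k => α₁ k - α₂ k) 2 volume).toReal +
        8 * Real.sqrt 2 * Real.pi ^ 2 *
          (eLpNorm (fun k => omega d m k ^ ((3 : ℝ) / 2 - σ) * χ k) 2 volume).toReal *
          ‖q₁ j - q₂ j‖ * Gnorm d m σ α₂ := by
  obtain ⟨hσ0, hσ1⟩ := hσ
  have hπ := Real.pi_pos
  have hsqrt2 : (1 : ℝ) ≤ Real.sqrt 2 := by
    rw [show (1 : ℝ) = Real.sqrt 1 by simp]
    exact Real.sqrt_le_sqrt one_le_two
  have hσ0' : (0 : ℝ) ≤ σ := le_trans (by norm_num) hσ0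
  have hωpos : ∀ k, 0 < omega d m k := fun k => Real.sqrt_pos.mpr (by positivity)
  have hωs : ∀ k, 0 < Real.sqrt (omega d m k) := fun k => Real.sqrt_pos.mpr (hωpos k)
  have hkω : ∀ k : EuclideanSpace ℝ (Fin d), ‖k‖ ≤ omega d m k := fun k =>
    calc ‖k‖ = Real.sqrt (‖k‖ ^ 2) := (Real.sqrt_sq (norm_nonneg k)).symm
      _ ≤ Real.sqrt (‖k‖ ^ 2 + m ^ 2) := Real.sqrt_le_sqrt (by nlinarith [sq_nonneg m])
      _ = omega d m k := rfl
  have hωmge : ∀ k, m ≤ omega d m k := fun k =>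
    calc m = Real.sqrt (m ^ 2) := (Real.sqrt_sq hm.le).symm
      _ ≤ Real.sqrt (‖k‖ ^ 2 + m ^ 2) := Real.sqrt_le_sqrt (by nlinarith [sq_nonneg ‖k‖])
      _ = omega d m k := rfl
  have hωmeas : Measurable (omega d m) :=
    (Real.continuous_sqrt.comp ((continuous_norm.pow 2).add continuous_const)).measurable
  have hcoord : ∀ (k : EuclideanSpace ℝ (Fin d)) (i : Fin d), |k i| ≤ ‖k‖ := by
    intro k i
    rw [EuclideanSpace.norm_eq, ← Real.sqrt_sq_eq_abs]
    apply Real.sqrt_le_sqrt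
    calc k i ^ 2 = ‖k i‖ ^ 2 := by rw [Real.norm_eq_abs, sq_abs]
      _ ≤ ∑ l, ‖k l‖ ^ 2 :=
        Finset.single_le_sum (f := fun l => ‖k l‖ ^ 2) (fun l _ => by positivity)
          (Finset.mem_univ i)
  -- a.e. strong measurability of χ and the α's
  have hχm : AEStronglyMeasurable χ volume := by
    have heq : (fun k => (Real.sqrt (omega d m k))⁻¹ * (Real.sqrt (omega d m k) * χ k)) = χ := by
      funext k; rw [← mul_assoc, inv_mul_cancel₀ (hωs k).ne', one_mul]
    rw [← heq]
    exact ((hωmeas.sqrt.inv).aestronglyMeasurable.mul hχ₁.1)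
  have hαm : ∀ α, MemLp (fun k => ((omega d m k ^ σ : ℝ) : ℂ) * α k) 2 volume →
      AEStronglyMeasurable α volume := by
    intro α hα
    have hne : ∀ k, ((omega d m k ^ σ : ℝ) : ℂ) ≠ 0 := fun k => by
      simp only [ne_eq, Complex.ofReal_eq_zero]
      exact (Real.rpow_pos_of_pos (hωpos k) σ).ne'
    have heq : (fun k => (((omega d m k ^ σ : ℝ) : ℂ))⁻¹ *
        (((omega d m k ^ σ : ℝ) : ℂ) * α k)) = α := by
      funext k; rw [← mul_assoc, inv_mul_cancel₀ (hne k), one_mul]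
    rw [← heq]
    exact ((Complex.measurable_ofReal.comp (hωmeas.pow_const σ)).inv).aestronglyMeasurable.mul hα.1
  have hα₁m := hαm α₁ hα₁
  have hα₂m := hαm α₂ hα₂
  have hαL2 : ∀ α, MemLp (fun k => ((omega d m k ^ σ : ℝ) : ℂ) * α k) 2 volume →
      AEStronglyMeasurable α volume → MemLp α 2 volume := by
    intro α hα hαm'
    have hmσ : 0 < m ^ σ := Real.rpow_pos_of_pos hm σ
    apply MemLp.of_le_mul hα hαm' (c := (m ^ σ)⁻¹)
    filter_upwards with k
    have h1 : m ^ σ ≤ omega d m k ^ σ := Real.rpow_le_rpow hm.le (hωmge k) hσ0'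
    have h2 : ‖((omega d m k ^ σ : ℝ) : ℂ) * α k‖ = omega d m k ^ σ * ‖α k‖ := by
      rw [norm_mul, Complex.norm_real, Real.norm_eq_abs,
        abs_of_pos (Real.rpow_pos_of_pos (hωpos k) σ)]
    rw [h2]
    calc ‖α k‖ = (m ^ σ)⁻¹ * (m ^ σ * ‖α k‖) := by field_simp
      _ ≤ (m ^ σ)⁻¹ * (omega d m k ^ σ * ‖α k‖) := by gcongr
  have hα₁2 := hαL2 α₁ hα₁ hα₁m
  have hα₂2 := hαL2 α₂ hα₂ hα₂m
  have hΔα2 : MemLp (fun k => α₁ k - α₂ k) 2 volume := hα₁2.sub hα₂2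
  -- measurability of the phases and of Dfun
  have hθm : ∀ q : EuclideanSpace ℝ (Fin d),
      Measurable (fun k : EuclideanSpace ℝ (Fin d) => theta d q k) := by
    intro q
    unfold theta
    exact (Finset.measurable_sum Finset.univ (fun l _ =>
      ((EuclideanSpace.proj (𝕜 := ℝ) l).continuous.measurable).mul_const (q l))).const_mul _
  have hem : ∀ q : EuclideanSpace ℝ (Fin d),
      Measurable (fun k => Complex.exp (((theta d q k : ℝ) : ℂ) * Complex.I)) := fun q =>
    Complex.measurable_exp.comp ((Complex.measurable_ofReal.comp (hθm q)).mul_const Complex.I)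
  have hem' : ∀ q : EuclideanSpace ℝ (Fin d),
      Measurable (fun k => Complex.exp (-(((theta d q k : ℝ) : ℂ) * Complex.I))) := fun q =>
    Complex.measurable_exp.comp
      (((Complex.measurable_ofReal.comp (hθm q)).mul_const Complex.I).neg)
  have hDm : ∀ (q : EuclideanSpace ℝ (Fin d)) (α : EuclideanSpace ℝ (Fin d) → ℂ),
      AEStronglyMeasurable α volume → AEStronglyMeasurable (Dfun d q α) volume := by
    intro q α hαm'
    exact (hαm'.mul (hem q).aestronglyMeasurable).sub
      ((RCLike.continuous_conj.comp_aestronglyMeasurable hαm').mul (hem' q).aestronglyMeasurable)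
  have hexpnorm : ∀ (q : EuclideanSpace ℝ (Fin d)) k,
      ‖Complex.exp (((theta d q k : ℝ) : ℂ) * Complex.I)‖ = 1 := fun q k =>
    Complex.norm_exp_ofReal_mul_I _
  have hexpnorm' : ∀ (q : EuclideanSpace ℝ (Fin d)) k,
      ‖Complex.exp (-(((theta d q k : ℝ) : ℂ) * Complex.I))‖ = 1 := by
    intro q k
    rw [show -(((theta d q k : ℝ) : ℂ) * Complex.I) = ((-(theta d q k) : ℝ) : ℂ) * Complex.I by
      push_cast; ring]
    exact Complex.norm_exp_ofReal_mul_I _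
  have hDnorm : ∀ (q : EuclideanSpace ℝ (Fin d)) (α : EuclideanSpace ℝ (Fin d) → ℂ) k,
      ‖Dfun d q α k‖ ≤ 2 * ‖α k‖ := by
    intro q α k
    calc ‖Dfun d q α k‖ ≤ ‖α k * Complex.exp (((theta d q k : ℝ) : ℂ) * Complex.I)‖ +
        ‖(starRingEnd ℂ) (α k) * Complex.exp (-(((theta d q k : ℝ) : ℂ) * Complex.I))‖ :=
          norm_sub_le _ _
      _ = ‖α k‖ + ‖α k‖ := by
          rw [norm_mul, norm_mul, hexpnorm, hexpnorm', RCLike.norm_conj]; ring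
      _ = 2 * ‖α k‖ := by ring
  -- norm of the integrand
  have hfgnorm : ∀ (q : EuclideanSpace ℝ (Fin d)) (α : EuclideanSpace ℝ (Fin d) → ℂ) i k,
      ‖fIg d m χ q α i k‖ =
        2 * Real.pi * |k i| * (‖χ k‖ / Real.sqrt (omega d m k)) * ‖Dfun d q α k‖ := by
    intro q α i k
    have h1 : ‖((χ k / Real.sqrt (omega d m k) : ℝ) : ℂ)‖ =
        ‖χ k‖ / Real.sqrt (omega d m k) := by
      rw [Complex.norm_real, Real.norm_eq_abs, Real.norm_eq_abs, abs_div,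
        abs_of_pos (hωs k)]
    have h2 : ‖(((k i : ℝ)) : ℂ)‖ = |k i| := by
      rw [Complex.norm_real, Real.norm_eq_abs]
    have h3 : ‖(2 : ℂ)‖ = 2 := by norm_num
    have h4 : ‖((Real.pi : ℝ) : ℂ)‖ = Real.pi := by
      rw [Complex.norm_real, Real.norm_eq_abs, abs_of_pos hπ]
    unfold fIg
    simp only [norm_mul, Complex.norm_I]
    rw [h1, h2, h3, h4]
    ring
  -- integrability of the integrands
  have hfgint : ∀ (q : EuclideanSpace ℝ (Fin d)) (α : EuclideanSpace ℝ (Fin d) → ℂ),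
      AEStronglyMeasurable α volume → MemLp α 2 volume → ∀ i,
      Integrable (fIg d m χ q α i) volume := by
    intro q α hαm' hα2 i
    have haesm : AEStronglyMeasurable (fIg d m χ q α i) volume := by
      unfold fIg
      refine AEStronglyMeasurable.mul (AEStronglyMeasurable.mul ?_ ?_) (hDm q α hαm')
      · exact ((Complex.measurable_ofReal.comp
          ((EuclideanSpace.proj (𝕜 := ℝ) i).continuous.measurable)).aestronglyMeasurable).const_mul _
      · have hdiv : AEStronglyMeasurable (fun k => χ k / Real.sqrt (omega d m k)) volume := by
          have : (fun k => χ k / Real.sqrt (omega d m k)) =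
              fun k => χ k * (Real.sqrt (omega d m k))⁻¹ :=
            funext fun k => div_eq_mul_inv _ _
          rw [this]
          exact hχm.mul (hωmeas.sqrt.inv.aestronglyMeasurable)
        exact Complex.continuous_ofReal.comp_aestronglyMeasurable hdiv
    apply Integrable.mono'
      ((mul_mem2_integrable hχ₁.norm hα2.norm).const_mul (4 * Real.pi)) haesm
    filter_upwards with k
    rw [hfgnorm]
    have hki : |k i| ≤ omega d m k := (hcoord k i).trans (hkω k)
    have hns : ‖Real.sqrt (omega d m k) * χ k‖ = Real.sqrt (omega d m k) * ‖χ k‖ := by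
      rw [norm_mul, Real.norm_eq_abs (Real.sqrt _), abs_of_pos (hωs k)]
    calc 2 * Real.pi * |k i| * (‖χ k‖ / Real.sqrt (omega d m k)) * ‖Dfun d q α k‖
        ≤ 2 * Real.pi * omega d m k * (‖χ k‖ / Real.sqrt (omega d m k)) * (2 * ‖α k‖) := by
          refine mul_le_mul ?_ (hDnorm q α k) (norm_nonneg _) ?_
          · refine mul_le_mul_of_nonneg_right
              (mul_le_mul_of_nonneg_left hki (by positivity)) ?_
            positivity
          · have h0 : (0:ℝ) ≤ omega d m k := (hωpos k).le
            positivity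
      _ = 4 * Real.pi * (omega d m k / Real.sqrt (omega d m k)) * ‖χ k‖ * ‖α k‖ := by
          ring
      _ = 4 * Real.pi * (‖Real.sqrt (omega d m k) * χ k‖ * ‖α k‖) := by
          rw [Real.div_sqrt, hns]; ring
  have hint₁ := hfgint (q₁ j) α₁ hα₁m hα₁2
  have hint₂ := hfgint (q₂ j) α₂ hα₂m hα₂2
  have hhint : ∀ i, Integrable
      (fun k => fIg d m χ (q₁ j) α₁ i k - fIg d m χ (q₂ j) α₂ i k) volume :=
    fun i => (hint₁ i).sub (hint₂ i)
  have hceq : ∀ i, gradI d m χ (q₁ j) α₁ i - gradI d m χ (q₂ j) α₂ i =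
      ∫ k, (fIg d m χ (q₁ j) α₁ i k - fIg d m χ (q₂ j) α₂ i k) := by
    intro i
    rw [gradI_eq, gradI_eq, ← integral_sub (hint₁ i) (hint₂ i)]
  have hdiff : ∀ (i : Fin d) k, fIg d m χ (q₁ j) α₁ i k - fIg d m χ (q₂ j) α₂ i k =
      2 * (Real.pi : ℂ) * Complex.I * ((k i : ℝ) : ℂ) *
        ((χ k / Real.sqrt (omega d m k) : ℝ) : ℂ) *
        (Dfun d (q₁ j) α₁ k - Dfun d (q₂ j) α₂ k) := by
    intro i k; unfold fIg; ring
  have hhnorm : ∀ (i : Fin d) k, ‖fIg d m χ (q₁ j) α₁ i k - fIg d m χ (q₂ j) α₂ i k‖ =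
      2 * Real.pi * |k i| * (‖χ k‖ / Real.sqrt (omega d m k)) *
        ‖Dfun d (q₁ j) α₁ k - Dfun d (q₂ j) α₂ k‖ := by
    intro i k
    rw [hdiff i k]
    have h1 : ‖((χ k / Real.sqrt (omega d m k) : ℝ) : ℂ)‖ =
        ‖χ k‖ / Real.sqrt (omega d m k) := by
      rw [Complex.norm_real, Real.norm_eq_abs, Real.norm_eq_abs, abs_div,
        abs_of_pos (hωs k)]
    have h2 : ‖(((k i : ℝ)) : ℂ)‖ = |k i| := by
      rw [Complex.norm_real, Real.norm_eq_abs]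
    have h3 : ‖(2 : ℂ)‖ = 2 := by norm_num
    have h4 : ‖((Real.pi : ℝ) : ℂ)‖ = Real.pi := by
      rw [Complex.norm_real, Real.norm_eq_abs, abs_of_pos hπ]
    simp only [norm_mul, Complex.norm_I]
    rw [h1, h2, h3, h4]
    ring
  -- bound on the difference DD
  have hθdiff : ∀ k : EuclideanSpace ℝ (Fin d),
      |theta d (q₁ j) k - theta d (q₂ j) k| ≤ 2 * Real.pi * (‖k‖ * ‖q₁ j - q₂ j‖) := by
    intro k
    have heq : theta d (q₁ j) k - theta d (q₂ j) k =
        2 * Real.pi * ∑ l, k l * (q₁ j - q₂ j) l := by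
      unfold theta
      rw [← mul_sub, ← Finset.sum_sub_distrib]
      congr 1
      refine Finset.sum_congr rfl fun l _ => ?_
      have : (q₁ j - q₂ j) l = q₁ j l - q₂ j l := rfl
      rw [this]; ring
    rw [heq, abs_mul, abs_of_pos (by positivity : (0:ℝ) < 2 * Real.pi)]
    have hinner : inner (𝕜 := ℝ) k (q₁ j - q₂ j) = ∑ l, k l * (q₁ j - q₂ j) l := by
      rw [PiLp.inner_apply]
      simp [RCLike.inner_apply]
      exact Finset.sum_congr rfl fun l _ => by ring
    rw [← hinner]
    exact mul_le_mul_of_nonneg_left (abs_real_inner_le_norm _ _) (by positivity)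
  have hDDle : ∀ k, ‖Dfun d (q₁ j) α₁ k - Dfun d (q₂ j) α₂ k‖ ≤
      2 * ‖α₁ k - α₂ k‖ + 2 * ‖α₂ k‖ * (2 * Real.pi * (‖k‖ * ‖q₁ j - q₂ j‖)) := by
    intro k
    set u := theta d (q₁ j) k with hu
    set v := theta d (q₂ j) k with hv
    have he1 : ‖Complex.exp ((u : ℂ) * Complex.I) - Complex.exp ((v : ℂ) * Complex.I)‖ ≤
        |u - v| := exp_diff_bound u v
    have he2 : ‖Complex.exp (-((u : ℂ) * Complex.I)) - Complex.exp (-((v : ℂ) * Complex.I))‖ ≤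
        |u - v| := by
      rw [show -((u : ℂ) * Complex.I) = ((-u : ℝ) : ℂ) * Complex.I by push_cast; ring,
        show -((v : ℂ) * Complex.I) = ((-v : ℝ) : ℂ) * Complex.I by push_cast; ring]
      have := exp_diff_bound (-u) (-v)
      rwa [show -u - -v = -(u - v) by ring, abs_neg] at this
    have hsplit : Dfun d (q₁ j) α₁ k - Dfun d (q₂ j) α₂ k =
        ((α₁ k - α₂ k) * Complex.exp ((u : ℂ) * Complex.I) -
          (starRingEnd ℂ) (α₁ k - α₂ k) * Complex.exp (-((u : ℂ) * Complex.I))) +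
        (α₂ k * (Complex.exp ((u : ℂ) * Complex.I) - Complex.exp ((v : ℂ) * Complex.I)) -
          (starRingEnd ℂ) (α₂ k) *
            (Complex.exp (-((u : ℂ) * Complex.I)) - Complex.exp (-((v : ℂ) * Complex.I)))) := by
      unfold Dfun
      rw [← hu, ← hv, map_sub]
      ring
    have hb1 : ‖(α₁ k - α₂ k) * Complex.exp ((u : ℂ) * Complex.I) -
        (starRingEnd ℂ) (α₁ k - α₂ k) * Complex.exp (-((u : ℂ) * Complex.I))‖ ≤
        2 * ‖α₁ k - α₂ k‖ := by
      calc _ ≤ ‖(α₁ k - α₂ k) * Complex.exp ((u : ℂ) * Complex.I)‖ +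
          ‖(starRingEnd ℂ) (α₁ k - α₂ k) * Complex.exp (-((u : ℂ) * Complex.I))‖ :=
            norm_sub_le _ _
        _ ≤ 2 * ‖α₁ k - α₂ k‖ := by
            rw [norm_mul, norm_mul, RCLike.norm_conj, hu, hexpnorm, hexpnorm']
            ring_nf; rfl
    have hb2 : ‖α₂ k * (Complex.exp ((u : ℂ) * Complex.I) - Complex.exp ((v : ℂ) * Complex.I)) -
        (starRingEnd ℂ) (α₂ k) *
          (Complex.exp (-((u : ℂ) * Complex.I)) - Complex.exp (-((v : ℂ) * Complex.I)))‖ ≤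
        2 * ‖α₂ k‖ * |u - v| := by
      calc _ ≤ ‖α₂ k * (Complex.exp ((u : ℂ) * Complex.I) - Complex.exp ((v : ℂ) * Complex.I))‖ +
          ‖(starRingEnd ℂ) (α₂ k) *
            (Complex.exp (-((u : ℂ) * Complex.I)) - Complex.exp (-((v : ℂ) * Complex.I)))‖ :=
            norm_sub_le _ _
        _ = ‖α₂ k‖ * ‖Complex.exp ((u : ℂ) * Complex.I) - Complex.exp ((v : ℂ) * Complex.I)‖ +
            ‖α₂ k‖ * ‖Complex.exp (-((u : ℂ) * Complex.I)) -
              Complex.exp (-((v : ℂ) * Complex.I))‖ := by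
            rw [norm_mul, norm_mul, RCLike.norm_conj]
        _ ≤ ‖α₂ k‖ * |u - v| + ‖α₂ k‖ * |u - v| := by
            gcongr
        _ = 2 * ‖α₂ k‖ * |u - v| := by ring
    calc ‖Dfun d (q₁ j) α₁ k - Dfun d (q₂ j) α₂ k‖ ≤
        2 * ‖α₁ k - α₂ k‖ + 2 * ‖α₂ k‖ * |u - v| := by
          rw [hsplit]
          exact (norm_add_le _ _).trans (add_le_add hb1 hb2)
      _ ≤ 2 * ‖α₁ k - α₂ k‖ + 2 * ‖α₂ k‖ * (2 * Real.pi * (‖k‖ * ‖q₁ j - q₂ j‖)) := by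
          gcongr
          exact hθdiff k
  -- the scalar majorant P and the bounds B₁, B₂
  set P : EuclideanSpace ℝ (Fin d) → ℝ := fun k =>
    2 * Real.pi * (‖χ k‖ / Real.sqrt (omega d m k)) *
      ‖Dfun d (q₁ j) α₁ k - Dfun d (q₂ j) α₂ k‖ * ‖k‖ with hPdef
  set B₁ : EuclideanSpace ℝ (Fin d) → ℝ := fun k =>
    4 * Real.pi * (‖Real.sqrt (omega d m k) * χ k‖ * ‖α₁ k - α₂ k‖) with hB₁def
  set B₂ : EuclideanSpace ℝ (Fin d) → ℝ := fun k =>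
    (8 * Real.sqrt 2 * Real.pi ^ 2 * ‖q₁ j - q₂ j‖) *
      (‖omega d m k ^ ((3 : ℝ) / 2 - σ) * χ k‖ *
        ‖((omega d m k ^ σ : ℝ) : ℂ) * α₂ k‖) with hB₂def
  have hPnn : ∀ k, 0 ≤ P k := by
    intro k; simp only [hPdef]; positivity
  have hB₁int : Integrable B₁ volume := by
    rw [hB₁def]; exact (mul_mem2_integrable hχ₁.norm hΔα2.norm).const_mul _
  have hB₂int : Integrable B₂ volume := by
    rw [hB₂def]; exact (mul_mem2_integrable hχ₂.norm hα₂.norm).const_mul _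
  have hPB : ∀ k, P k ≤ B₁ k + B₂ k := by
    intro k
    simp only [hPdef, hB₁def, hB₂def]
    have hw := hωpos k
    have hs := hωs k
    have hkw := hkω k
    have hss : Real.sqrt (omega d m k) * Real.sqrt (omega d m k) = omega d m k :=
      Real.mul_self_sqrt hw.le
    have hA : omega d m k ^ ((3 : ℝ) / 2 - σ) * omega d m k ^ σ * Real.sqrt (omega d m k) =
        omega d m k ^ 2 := by
      rw [← Real.rpow_add hw, Real.sqrt_eq_rpow, ← Real.rpow_add hw]
      rw [show ((3 : ℝ) / 2 - σ + σ + 1 / 2) = ((2 : ℕ) : ℝ) by push_cast; ring,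
        Real.rpow_natCast]
    have hnorm1 : ‖Real.sqrt (omega d m k) * χ k‖ = Real.sqrt (omega d m k) * ‖χ k‖ := by
      rw [norm_mul, Real.norm_eq_abs (Real.sqrt _), abs_of_pos hs]
    have hnorm2 : ‖omega d m k ^ ((3 : ℝ) / 2 - σ) * χ k‖ =
        omega d m k ^ ((3 : ℝ) / 2 - σ) * ‖χ k‖ := by
      rw [norm_mul, Real.norm_eq_abs (_ ^ _), abs_of_pos (Real.rpow_pos_of_pos hw _)]
    have hnorm3 : ‖((omega d m k ^ σ : ℝ) : ℂ) * α₂ k‖ = omega d m k ^ σ * ‖α₂ k‖ := by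
      rw [norm_mul, Complex.norm_real, Real.norm_eq_abs,
        abs_of_pos (Real.rpow_pos_of_pos hw _)]
    rw [hnorm1, hnorm2, hnorm3]
    have hrw : 2 * Real.pi * (‖χ k‖ / Real.sqrt (omega d m k)) *
        ‖Dfun d (q₁ j) α₁ k - Dfun d (q₂ j) α₂ k‖ * ‖k‖ =
        2 * Real.pi * ‖χ k‖ * ‖Dfun d (q₁ j) α₁ k - Dfun d (q₂ j) α₂ k‖ * ‖k‖ /
          Real.sqrt (omega d m k) := by ring
    rw [hrw, div_le_iff₀ hs]
    have hDD := hDDle k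
    have e0 : 2 * Real.pi * ‖χ k‖ * ‖Dfun d (q₁ j) α₁ k - Dfun d (q₂ j) α₂ k‖ * ‖k‖ ≤
        2 * Real.pi * ‖χ k‖ *
          (2 * ‖α₁ k - α₂ k‖ + 2 * ‖α₂ k‖ * (2 * Real.pi * (‖k‖ * ‖q₁ j - q₂ j‖))) * ‖k‖ := by
      have := mul_le_mul_of_nonneg_right
        (mul_le_mul_of_nonneg_left hDD (by positivity : (0:ℝ) ≤ 2 * Real.pi * ‖χ k‖))
        (norm_nonneg k)
      linarith
    have f1 : 4 * Real.pi * ‖χ k‖ * ‖α₁ k - α₂ k‖ * ‖k‖ ≤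
        4 * Real.pi * ‖χ k‖ * ‖α₁ k - α₂ k‖ * omega d m k := by
      have := mul_le_mul_of_nonneg_left hkw
        (by positivity : (0:ℝ) ≤ 4 * Real.pi * ‖χ k‖ * ‖α₁ k - α₂ k‖)
      linarith
    have f2 : 8 * Real.pi ^ 2 * ‖χ k‖ * ‖α₂ k‖ * ‖q₁ j - q₂ j‖ * (‖k‖ * ‖k‖) ≤
        8 * Real.sqrt 2 * Real.pi ^ 2 * ‖χ k‖ * ‖α₂ k‖ * ‖q₁ j - q₂ j‖ *
          (omega d m k * omega d m k) := by
      have hk2 : ‖k‖ * ‖k‖ ≤ omega d m k * omega d m k :=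
        mul_le_mul hkw hkw (norm_nonneg k) ((norm_nonneg k).trans hkw)
      have hx : (0:ℝ) ≤ 8 * Real.pi ^ 2 * ‖χ k‖ * ‖α₂ k‖ * ‖q₁ j - q₂ j‖ := by positivity
      have hww : (0:ℝ) ≤ omega d m k * omega d m k :=
        mul_nonneg ((norm_nonneg k).trans hkw) ((norm_nonneg k).trans hkw)
      calc 8 * Real.pi ^ 2 * ‖χ k‖ * ‖α₂ k‖ * ‖q₁ j - q₂ j‖ * (‖k‖ * ‖k‖)
          ≤ 8 * Real.pi ^ 2 * ‖χ k‖ * ‖α₂ k‖ * ‖q₁ j - q₂ j‖ *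
            (omega d m k * omega d m k) := mul_le_mul_of_nonneg_left hk2 hx
        _ ≤ 8 * Real.sqrt 2 * Real.pi ^ 2 * ‖χ k‖ * ‖α₂ k‖ * ‖q₁ j - q₂ j‖ *
            (omega d m k * omega d m k) := by
            have h8 : 8 * Real.pi ^ 2 * ‖χ k‖ * ‖α₂ k‖ * ‖q₁ j - q₂ j‖ ≤
                8 * Real.sqrt 2 * Real.pi ^ 2 * ‖χ k‖ * ‖α₂ k‖ * ‖q₁ j - q₂ j‖ := by
              nlinarith [mul_nonneg hx (sub_nonneg.mpr hsqrt2)]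
            exact mul_le_mul_of_nonneg_right h8 hww
    calc 2 * Real.pi * ‖χ k‖ * ‖Dfun d (q₁ j) α₁ k - Dfun d (q₂ j) α₂ k‖ * ‖k‖
        ≤ 2 * Real.pi * ‖χ k‖ *
          (2 * ‖α₁ k - α₂ k‖ + 2 * ‖α₂ k‖ * (2 * Real.pi * (‖k‖ * ‖q₁ j - q₂ j‖))) * ‖k‖ := e0
      _ = 4 * Real.pi * ‖χ k‖ * ‖α₁ k - α₂ k‖ * ‖k‖ +
          8 * Real.pi ^ 2 * ‖χ k‖ * ‖α₂ k‖ * ‖q₁ j - q₂ j‖ * (‖k‖ * ‖k‖) := by ring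
      _ ≤ 4 * Real.pi * ‖χ k‖ * ‖α₁ k - α₂ k‖ * omega d m k +
          8 * Real.sqrt 2 * Real.pi ^ 2 * ‖χ k‖ * ‖α₂ k‖ * ‖q₁ j - q₂ j‖ *
            (omega d m k * omega d m k) := add_le_add f1 f2
      _ = (4 * Real.pi * (Real.sqrt (omega d m k) * ‖χ k‖ * ‖α₁ k - α₂ k‖) +
          8 * Real.sqrt 2 * Real.pi ^ 2 * ‖q₁ j - q₂ j‖ *
            (omega d m k ^ ((3 : ℝ) / 2 - σ) * ‖χ k‖ * (omega d m k ^ σ * ‖α₂ k‖))) *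
            Real.sqrt (omega d m k) := by
          linear_combination (-(4 * Real.pi * ‖χ k‖ * ‖α₁ k - α₂ k‖)) * hss +
            (-(8 * Real.sqrt 2 * Real.pi ^ 2 * ‖χ k‖ * ‖α₂ k‖ * ‖q₁ j - q₂ j‖)) * hA
  have hPm : AEStronglyMeasurable P volume := by
    rw [hPdef]
    have hdiv : AEStronglyMeasurable (fun k => ‖χ k‖ / Real.sqrt (omega d m k)) volume := by
      have heq : (fun k => ‖χ k‖ / Real.sqrt (omega d m k)) =
          fun k => ‖χ k‖ * (Real.sqrt (omega d m k))⁻¹ :=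
        funext fun k => div_eq_mul_inv _ _
      rw [heq]
      exact hχm.norm.mul (hωmeas.sqrt.inv.aestronglyMeasurable)
    have hDDm : AEStronglyMeasurable
        (fun k => Dfun d (q₁ j) α₁ k - Dfun d (q₂ j) α₂ k) volume :=
      (hDm _ _ hα₁m).sub (hDm _ _ hα₂m)
    exact ((hdiv.const_mul _).mul hDDm.norm).mul continuous_norm.aestronglyMeasurable
  have hPint : Integrable P volume := by
    refine (hB₁int.add hB₂int).mono' hPm ?_
    filter_upwards with k
    rw [Real.norm_eq_abs, abs_of_nonneg (hPnn k)]
    exact hPB k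
  -- Cauchy–Schwarz in L²
  have hCS₁ : ∫ k, ‖Real.sqrt (omega d m k) * χ k‖ * ‖α₁ k - α₂ k‖ ≤
      (eLpNorm (fun k => Real.sqrt (omega d m k) * χ k) 2 volume).toReal *
        (eLpNorm (fun k => α₁ k - α₂ k) 2 volume).toReal := cs2 hχ₁ hΔα2
  have hCS₂ : ∫ k, ‖omega d m k ^ ((3 : ℝ) / 2 - σ) * χ k‖ *
      ‖((omega d m k ^ σ : ℝ) : ℂ) * α₂ k‖ ≤
      (eLpNorm (fun k => omega d m k ^ ((3 : ℝ) / 2 - σ) * χ k) 2 volume).toReal *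
        (eLpNorm (fun k => ((omega d m k ^ σ : ℝ) : ℂ) * α₂ k) 2 volume).toReal := cs2 hχ₂ hα₂
  have hPle : ∫ k, P k ≤
      4 * Real.pi * (eLpNorm (fun k => Real.sqrt (omega d m k) * χ k) 2 volume).toReal *
        (eLpNorm (fun k => α₁ k - α₂ k) 2 volume).toReal +
      8 * Real.sqrt 2 * Real.pi ^ 2 *
        (eLpNorm (fun k => omega d m k ^ ((3 : ℝ) / 2 - σ) * χ k) 2 volume).toReal *
        ‖q₁ j - q₂ j‖ * Gnorm d m σ α₂ := by
    have h1 : ∫ k, P k ≤ ∫ k, (B₁ k + B₂ k) :=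
      integral_mono hPint (hB₁int.add hB₂int) hPB
    have h2 : ∫ k, (B₁ k + B₂ k) = (∫ k, B₁ k) + ∫ k, B₂ k := integral_add hB₁int hB₂int
    have h3 : ∫ k, B₁ k =
        4 * Real.pi * ∫ k, ‖Real.sqrt (omega d m k) * χ k‖ * ‖α₁ k - α₂ k‖ := by
      rw [hB₁def]; exact integral_const_mul _ _
    have h4 : ∫ k, B₂ k = (8 * Real.sqrt 2 * Real.pi ^ 2 * ‖q₁ j - q₂ j‖) *
        ∫ k, ‖omega d m k ^ ((3 : ℝ) / 2 - σ) * χ k‖ *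
          ‖((omega d m k ^ σ : ℝ) : ℂ) * α₂ k‖ := by
      rw [hB₂def]; exact integral_const_mul _ _
    have h5 : (0:ℝ) ≤ 4 * Real.pi := by positivity
    have h6 : (0:ℝ) ≤ 8 * Real.sqrt 2 * Real.pi ^ 2 * ‖q₁ j - q₂ j‖ := by positivity
    have hG : Gnorm d m σ α₂ =
        (eLpNorm (fun k => ((omega d m k ^ σ : ℝ) : ℂ) * α₂ k) 2 volume).toReal := rfl
    calc ∫ k, P k ≤ (∫ k, B₁ k) + ∫ k, B₂ k := by rw [← h2]; exact h1
      _ ≤ 4 * Real.pi *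
            ((eLpNorm (fun k => Real.sqrt (omega d m k) * χ k) 2 volume).toReal *
              (eLpNorm (fun k => α₁ k - α₂ k) 2 volume).toReal) +
          (8 * Real.sqrt 2 * Real.pi ^ 2 * ‖q₁ j - q₂ j‖) *
            ((eLpNorm (fun k => omega d m k ^ ((3 : ℝ) / 2 - σ) * χ k) 2 volume).toReal *
              (eLpNorm (fun k => ((omega d m k ^ σ : ℝ) : ℂ) * α₂ k) 2 volume).toReal) := by
          rw [h3, h4]
          exact add_le_add (mul_le_mul_of_nonneg_left hCS₁ h5)
            (mul_le_mul_of_nonneg_left hCS₂ h6)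
      _ = _ := by rw [hG]; ring
  -- the duality argument
  have main : ∀ c : Fin d → ℂ,
      (∀ i, c i = ∫ k, (fIg d m χ (q₁ j) α₁ i k - fIg d m χ (q₂ j) α₂ i k)) →
      Real.sqrt (∑ i, ‖c i‖ ^ 2) ≤ ∫ k, P k := by
    intro c hc
    set S := Real.sqrt (∑ i, ‖c i‖ ^ 2) with hSdef
    have hSnn : (0:ℝ) ≤ S := Real.sqrt_nonneg _
    have hCSfin : ∀ k : EuclideanSpace ℝ (Fin d), ∑ i, ‖c i‖ * |k i| ≤ S * ‖k‖ := by
      intro k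
      set u : EuclideanSpace ℝ (Fin d) :=
        (WithLp.equiv 2 (Fin d → ℝ)).symm (fun i => ‖c i‖) with hudef
      set v : EuclideanSpace ℝ (Fin d) :=
        (WithLp.equiv 2 (Fin d → ℝ)).symm (fun i => |k i|) with hvdef
      have hui : ∀ i, u i = ‖c i‖ := fun i => rfl
      have hvi : ∀ i, v i = |k i| := fun i => rfl
      have h1 := abs_real_inner_le_norm u v
      have h2 : inner (𝕜 := ℝ) u v = ∑ i, ‖c i‖ * |k i| := by
        rw [PiLp.inner_apply]
        refine Finset.sum_congr rfl fun i _ => ?_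
        rw [hui i, hvi i]
        simp [RCLike.inner_apply]
        exact mul_comm _ _
      have h3 : ‖u‖ = S := by
        rw [EuclideanSpace.norm_eq, hSdef]
        refine congrArg Real.sqrt (Finset.sum_congr rfl fun i _ => ?_)
        rw [hui i, norm_norm]
      have h4 : ‖v‖ = ‖k‖ := by
        rw [EuclideanSpace.norm_eq, EuclideanSpace.norm_eq]
        refine congrArg Real.sqrt (Finset.sum_congr rfl fun i _ => ?_)
        rw [hvi i, Real.norm_eq_abs, abs_abs, Real.norm_eq_abs]
      calc ∑ i, ‖c i‖ * |k i| = inner (𝕜 := ℝ) u v := h2.symm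
        _ ≤ |inner (𝕜 := ℝ) u v| := le_abs_self _
        _ ≤ ‖u‖ * ‖v‖ := h1
        _ = S * ‖k‖ := by rw [h3, h4]
    have hsum_le : ∀ k, (∑ i, ‖c i‖ *
        ‖fIg d m χ (q₁ j) α₁ i k - fIg d m χ (q₂ j) α₂ i k‖) ≤ S * P k := by
      intro k
      calc (∑ i, ‖c i‖ * ‖fIg d m χ (q₁ j) α₁ i k - fIg d m χ (q₂ j) α₂ i k‖)
          = (2 * Real.pi * (‖χ k‖ / Real.sqrt (omega d m k)) *
              ‖Dfun d (q₁ j) α₁ k - Dfun d (q₂ j) α₂ k‖) * ∑ i, ‖c i‖ * |k i| := by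
            rw [Finset.mul_sum]
            refine Finset.sum_congr rfl fun i _ => ?_
            rw [hhnorm i k]; ring
        _ ≤ (2 * Real.pi * (‖χ k‖ / Real.sqrt (omega d m k)) *
              ‖Dfun d (q₁ j) α₁ k - Dfun d (q₂ j) α₂ k‖) * (S * ‖k‖) := by
            apply mul_le_mul_of_nonneg_left (hCSfin k) (by positivity)
        _ = S * P k := by simp only [hPdef]; ring
    have hGint : Integrable (fun k => ∑ i, (starRingEnd ℂ) (c i) *
        (fIg d m χ (q₁ j) α₁ i k - fIg d m χ (q₂ j) α₂ i k)) volume :=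
      integrable_finset_sum _ fun i _ => (hhint i).const_mul _
    have hGval : (∫ k, ∑ i, (starRingEnd ℂ) (c i) *
        (fIg d m χ (q₁ j) α₁ i k - fIg d m χ (q₂ j) α₂ i k)) =
        ∑ i, (starRingEnd ℂ) (c i) * c i := by
      rw [integral_finset_sum _ fun i _ => (hhint i).const_mul _]
      refine Finset.sum_congr rfl fun i _ => ?_
      rw [integral_const_mul, ← hc i]
    have hre : (∑ i, (starRingEnd ℂ) (c i) * c i).re = ∑ i, ‖c i‖ ^ 2 := by
      rw [Complex.re_sum]
      refine Finset.sum_congr rfl fun i _ => ?_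
      rw [mul_comm, Complex.mul_conj]
      norm_cast
      rw [Complex.normSq_eq_norm_sq]
    have hchain : ∑ i, ‖c i‖ ^ 2 ≤ S * ∫ k, P k := by
      calc ∑ i, ‖c i‖ ^ 2 = (∑ i, (starRingEnd ℂ) (c i) * c i).re := hre.symm
        _ = (∫ k, ∑ i, (starRingEnd ℂ) (c i) *
            (fIg d m χ (q₁ j) α₁ i k - fIg d m χ (q₂ j) α₂ i k)).re := by rw [hGval]
        _ ≤ ‖∫ k, ∑ i, (starRingEnd ℂ) (c i) *
            (fIg d m χ (q₁ j) α₁ i k - fIg d m χ (q₂ j) α₂ i k)‖ := Complex.re_le_norm _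
        _ ≤ ∫ k, ‖∑ i, (starRingEnd ℂ) (c i) *
            (fIg d m χ (q₁ j) α₁ i k - fIg d m χ (q₂ j) α₂ i k)‖ :=
            norm_integral_le_integral_norm _
        _ ≤ ∫ k, S * P k := by
            refine integral_mono hGint.norm (hPint.const_mul S) ?_
            intro k
            calc ‖∑ i, (starRingEnd ℂ) (c i) *
                (fIg d m χ (q₁ j) α₁ i k - fIg d m χ (q₂ j) α₂ i k)‖
                ≤ ∑ i, ‖(starRingEnd ℂ) (c i) *
                  (fIg d m χ (q₁ j) α₁ i k - fIg d m χ (q₂ j) α₂ i k)‖ := norm_sum_le _ _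
              _ = ∑ i, ‖c i‖ * ‖fIg d m χ (q₁ j) α₁ i k - fIg d m χ (q₂ j) α₂ i k‖ := by
                  refine Finset.sum_congr rfl fun i _ => ?_
                  rw [norm_mul, RCLike.norm_conj]
              _ ≤ S * P k := hsum_le k
        _ = S * ∫ k, P k := integral_const_mul _ _
    have hS2 : S * S = ∑ i, ‖c i‖ ^ 2 := by
      rw [hSdef]; exact Real.mul_self_sqrt (by positivity)
    rcases eq_or_lt_of_le hSnn with h0 | h0
    · rw [← h0]
      exact integral_nonneg hPnn
    · have : S * S ≤ S * ∫ k, P k := by rw [hS2]; exact hchain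
      exact le_of_mul_le_mul_left this h0
  have hfinal := main
    (fun i => gradI d m χ (q₁ j) α₁ i - gradI d m χ (q₂ j) α₂ i) (fun i => hceq i)
  exact (hfinal.trans hPle)

end
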